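/- Let N ≥ 1, α ∈ (0,2), and r₀ = (N+2−α)/N. The Poisson kernel P(x,y) = c_{N,α} y^α/(|x|²+y²)^((N+α)/2) belongs to the weak Lebesgue space L^{r₀,∞}(ℝ^{N+1}_+, y^{1−α} dx dy), i.e. sup_{λ>0} λ^{r₀} · μ({P > λ}) < ∞, where μ = y^{1−α} dx dy. -/

import Mathlib

open MeasureTheory Real

/-- The Caffarelli–Silvestre Poisson kernel. -/
noncomputable def poissonKernelCS (N : ℕ) (α : ℝ)
    (x : EuclideanSpace ℝ (Fin N)) (y : ℝ) : ℝ :=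
  (Real.Gamma (((N : ℝ) + α) / 2) / (Real.pi ^ ((N : ℝ) / 2) * Real.Gamma (α / 2))) *
    y ^ α / (‖x‖ ^ 2 + y ^ 2) ^ (((N : ℝ) + α) / 2)

/-- `P ∈ L^{r₀,∞}(ℝ^{N+1}_+, y^{1-α} dx dy)` with `r₀ = (N+2-α)/N`. -/
theorem stmt4 (N : ℕ) (hN : 1 ≤ N) (α : ℝ) (hα : 0 < α) (hα2 : α < 2) :
    ∃ C : ℝ, 0 < C ∧ ∀ lam : ℝ, 0 < lam →
      ENNReal.ofReal (lam ^ (((N : ℝ) + 2 - α) / N)) *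
        (∫⁻ p in {p : EuclideanSpace ℝ (Fin N) × ℝ | 0 < p.2 ∧
            lam < poissonKernelCS N α p.1 p.2},
          ENNReal.ofReal (p.2 ^ (1 - α)))
      ≤ ENNReal.ofReal C := by
  have hNpos : (0:ℝ) < N := by exact_mod_cast hN
  have hNα : (0:ℝ) < (N:ℝ) + α := by linarith
  set c : ℝ := Real.Gamma (((N : ℝ) + α) / 2) / (Real.pi ^ ((N : ℝ) / 2) * Real.Gamma (α / 2))
    with hc_def
  have hc : 0 < c := by
    apply div_pos (Real.Gamma_pos_of_pos (by positivity))
    exact mul_pos (Real.rpow_pos_of_pos Real.pi_pos _) (Real.Gamma_pos_of_pos (by positivity))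
  set r₀ : ℝ := ((N:ℝ) + 2 - α) / N with hr₀_def
  set q : ℝ := (N:ℝ) / ((N:ℝ) + α) with hq_def
  have hq : 0 < q := div_pos hNpos hNα
  set β : ℝ := 1 - α + α * q with hβ_def
  have hβ1 : 0 < β + 1 := by
    have : 0 < α * q := mul_pos hα hq
    simp only [hβ_def]; linarith
  have hβ : -1 < β := by linarith
  have hqβ : q + (β + 1) / N = r₀ := by
    simp only [hβ_def, hq_def, hr₀_def]
    field_simp
    ring
  set B : ENNReal := volume (Metric.ball (0 : EuclideanSpace ℝ (Fin N)) 1) with hB_def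
  have hBlt : B < ⊤ := measure_ball_lt_top
  have hBpos : 0 < B := Metric.measure_ball_pos _ _ one_pos
  refine ⟨c ^ r₀ / (β + 1) * B.toReal, by
    have : 0 < B.toReal := ENNReal.toReal_pos hBpos.ne' hBlt.ne
    positivity, ?_⟩
  intro lam hlam
  set Y : ℝ := (c / lam) ^ ((1:ℝ)/N) with hY_def
  have hcl : 0 < c / lam := div_pos hc hlam
  have hYpos : 0 < Y := Real.rpow_pos_of_pos hcl _
  set R : ℝ → ℝ := fun y => (c / lam * y ^ α) ^ ((1:ℝ)/((N:ℝ)+α)) with hR_def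
  set S : Set (EuclideanSpace ℝ (Fin N) × ℝ) :=
    {p | p.2 ∈ Set.Ioo 0 Y ∧ ‖p.1‖ < R p.2} with hS_def
  -- inclusion of the level set
  have hsub : {p : EuclideanSpace ℝ (Fin N) × ℝ | 0 < p.2 ∧
      lam < poissonKernelCS N α p.1 p.2} ⊆ S := by
    rintro ⟨x, y⟩ ⟨hy, hP⟩
    simp only at hy hP
    have hD : (0:ℝ) < ‖x‖ ^ 2 + y ^ 2 := by positivity
    have hDs : (0:ℝ) < (‖x‖ ^ 2 + y ^ 2) ^ (((N:ℝ) + α) / 2) := Real.rpow_pos_of_pos hD _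
    rw [poissonKernelCS, ← hc_def, lt_div_iff₀ hDs] at hP
    -- hP : lam * D^s < c * y^α
    have key : lam * (‖x‖ ^ 2 + y ^ 2) ^ (((N:ℝ) + α) / 2) < c * y ^ α := hP
    have hy2 : (y:ℝ) ^ 2 ≤ ‖x‖ ^ 2 + y ^ 2 := le_add_of_nonneg_left (sq_nonneg _)
    refine ⟨⟨hy, ?_⟩, ?_⟩
    · -- y < Y
      have h1 : lam * (y ^ 2 : ℝ) ^ (((N:ℝ) + α) / 2) < c * y ^ α := by
        refine lt_of_le_of_lt ?_ key
        exact mul_le_mul_of_nonneg_left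
          (Real.rpow_le_rpow (by positivity) hy2 (by positivity)) hlam.le
      have h2 : ((y:ℝ) ^ 2) ^ (((N:ℝ) + α) / 2) = y ^ ((N:ℝ) + α) := by
        rw [← Real.rpow_natCast y 2, ← Real.rpow_mul hy.le]
        congr 1; ring
      rw [h2, Real.rpow_add hy, ← mul_assoc] at h1
      have h3 : lam * y ^ (N:ℝ) < c :=
        lt_of_mul_lt_mul_right (by simpa using h1) (Real.rpow_pos_of_pos hy α).le
      have h4 : y ^ (N:ℝ) < c / lam := (lt_div_iff₀' hlam).mpr h3
      have h5 : (y ^ (N:ℝ)) ^ ((1:ℝ)/N) < Y :=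
        Real.rpow_lt_rpow (by positivity) h4 (by positivity)
      rwa [← Real.rpow_mul hy.le, mul_one_div, div_self hNpos.ne', Real.rpow_one] at h5
    · -- ‖x‖ < R y
      have hZ : (0:ℝ) < c / lam * y ^ α := by positivity
      have h1 : (‖x‖ ^ 2 + y ^ 2) ^ (((N:ℝ) + α) / 2) < c / lam * y ^ α := by
        rw [div_mul_eq_mul_div, lt_div_iff₀ hlam]
        linarith [key]
      have h2 := Real.rpow_lt_rpow hDs.le h1 (show (0:ℝ) < 2/((N:ℝ)+α) by positivity)
      have hL : ((‖x‖ ^ 2 + y ^ 2) ^ (((N:ℝ) + α) / 2)) ^ ((2:ℝ)/((N:ℝ)+α))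
          = ‖x‖ ^ 2 + y ^ 2 := by
        rw [← Real.rpow_mul hD.le,
          show (((N:ℝ) + α) / 2) * ((2:ℝ)/((N:ℝ)+α)) = 1 by field_simp, Real.rpow_one]
      have hR2 : (R y) ^ 2 = (c / lam * y ^ α) ^ ((2:ℝ)/((N:ℝ)+α)) := by
        rw [hR_def]; dsimp only
        rw [← Real.rpow_natCast _ 2, ← Real.rpow_mul hZ.le]
        congr 1
        push_cast; ring
      have hx2 : ‖x‖ ^ 2 < (R y) ^ 2 := by
        rw [hR2]
        calc ‖x‖ ^ 2 < ‖x‖ ^ 2 + y ^ 2 := lt_add_of_pos_right _ (by positivity)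
        _ = ((‖x‖ ^ 2 + y ^ 2) ^ (((N:ℝ) + α) / 2)) ^ ((2:ℝ)/((N:ℝ)+α)) := hL.symm
        _ < _ := h2
      have hRpos : 0 < R y := Real.rpow_pos_of_pos hZ _
      exact lt_of_pow_lt_pow_left₀ 2 hRpos.le hx2
  -- measurability
  have hRmeas : Measurable R := by
    rw [hR_def]; fun_prop
  have hSmeas : MeasurableSet S := by
    rw [hS_def]
    exact (measurableSet_Ioo.preimage measurable_snd).inter
      (measurableSet_lt (measurable_norm.comp measurable_fst) (hRmeas.comp measurable_snd))
  have hfmeas : Measurable (fun p : EuclideanSpace ℝ (Fin N) × ℝ =>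
      ENNReal.ofReal (p.2 ^ (1 - α))) := by fun_prop
  -- Tonelli computation
  have hTon : ∫⁻ p in S, ENNReal.ofReal (p.2 ^ (1 - α))
      = ∫⁻ y in Set.Ioo 0 Y, ENNReal.ofReal (y ^ (1 - α)) *
          volume (Metric.ball (0 : EuclideanSpace ℝ (Fin N)) (R y)) := by
    rw [← lintegral_indicator hSmeas, Measure.volume_eq_prod,
      lintegral_prod_symm _ (hfmeas.indicator hSmeas).aemeasurable]
    rw [← lintegral_indicator (measurableSet_Ioo (a := (0:ℝ)) (b := Y))]
    refine lintegral_congr fun y => ?_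
    by_cases hy : y ∈ Set.Ioo 0 Y
    · have hfun : (fun x : EuclideanSpace ℝ (Fin N) =>
          S.indicator (fun p : EuclideanSpace ℝ (Fin N) × ℝ =>
            ENNReal.ofReal (p.2 ^ (1 - α))) (x, y))
          = (Metric.ball (0 : EuclideanSpace ℝ (Fin N)) (R y)).indicator
              (fun _ => ENNReal.ofReal (y ^ (1 - α))) := by
        funext x
        by_cases hx : x ∈ Metric.ball (0 : EuclideanSpace ℝ (Fin N)) (R y)
        · rw [Set.indicator_of_mem hx, Set.indicator_of_mem]
          rw [hS_def]; exact ⟨hy, mem_ball_zero_iff.mp hx⟩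
        · rw [Set.indicator_of_notMem hx, Set.indicator_of_notMem]
          rw [hS_def]
          intro hmem
          exact hx (mem_ball_zero_iff.mpr hmem.2)
      rw [hfun, lintegral_indicator measurableSet_ball, setLIntegral_const,
        Set.indicator_of_mem hy]
    · have hfun : (fun x : EuclideanSpace ℝ (Fin N) =>
          S.indicator (fun p : EuclideanSpace ℝ (Fin N) × ℝ =>
            ENNReal.ofReal (p.2 ^ (1 - α))) (x, y)) = fun _ => 0 := by
        funext x
        rw [Set.indicator_of_notMem]
        rw [hS_def]
        intro hmem
        exact hy hmem.1
      rw [hfun, lintegral_zero, Set.indicator_of_notMem hy]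
  -- pointwise bound on the slice integrand
  have hstep : ∀ y ∈ Set.Ioo (0:ℝ) Y,
      ENNReal.ofReal (y ^ (1 - α)) *
          volume (Metric.ball (0 : EuclideanSpace ℝ (Fin N)) (R y))
        ≤ ENNReal.ofReal ((c / lam) ^ q) * B * ENNReal.ofReal (y ^ β) := by
    intro y hy
    have hy0 : 0 < y := hy.1
    have hZ : (0:ℝ) < c / lam * y ^ α := by positivity
    have hRpos : 0 < R y := Real.rpow_pos_of_pos hZ _
    rw [Measure.addHaar_ball_of_pos volume (0 : EuclideanSpace ℝ (Fin N)) hRpos]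
    have hfr : (R y) ^ (Module.finrank ℝ (EuclideanSpace ℝ (Fin N)))
        = (c / lam) ^ q * y ^ (α * q) := by
      rw [finrank_euclideanSpace_fin, ← Real.rpow_natCast (R y) N, hR_def]
      dsimp only
      rw [← Real.rpow_mul hZ.le,
        show (1/((N:ℝ)+α)) * (N:ℝ) = q by rw [hq_def]; ring,
        Real.mul_rpow hcl.le (Real.rpow_nonneg hy0.le _), ← Real.rpow_mul hy0.le]
    rw [hfr]
    have hreal : y ^ (1 - α) * ((c / lam) ^ q * y ^ (α * q))
        = (c / lam) ^ q * y ^ β := by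
      rw [hβ_def, Real.rpow_add hy0 (1 - α) (α * q)]
      ring
    rw [← mul_assoc, ← ENNReal.ofReal_mul (Real.rpow_nonneg hy0.le _), hreal,
      ENNReal.ofReal_mul (Real.rpow_nonneg hcl.le _)]
    exact le_of_eq (by ring)
  -- the one-dimensional integral
  have hIoo : ∫⁻ y in Set.Ioo (0:ℝ) Y, ENNReal.ofReal (y ^ β)
      = ENNReal.ofReal (Y ^ (β + 1) / (β + 1)) := by
    rw [Measure.restrict_congr_set Ioo_ae_eq_Ioc]
    have hint : IntegrableOn (fun y : ℝ => y ^ β) (Set.Ioc 0 Y) := by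
      have h := intervalIntegral.intervalIntegrable_rpow' (a := 0) (b := Y) hβ
      rwa [intervalIntegrable_iff, Set.uIoc_of_le hYpos.le] at h
    have hnn : 0 ≤ᵐ[volume.restrict (Set.Ioc 0 Y)] fun y : ℝ => y ^ β :=
      (ae_restrict_iff' measurableSet_Ioc).2
        (Filter.Eventually.of_forall fun y hy => Real.rpow_nonneg hy.1.le _)
    rw [← ofReal_integral_eq_lintegral_ofReal hint hnn]
    congr 1
    rw [← intervalIntegral.integral_of_le hYpos.le, integral_rpow (Or.inl hβ),
      Real.zero_rpow (by linarith : β + 1 ≠ 0)]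
    ring
  -- assembling
  have hconst : lam ^ r₀ * ((c / lam) ^ q * (Y ^ (β + 1) / (β + 1)))
      = c ^ r₀ / (β + 1) := by
    have hYb : Y ^ (β + 1) = (c / lam) ^ ((β + 1) / N) := by
      rw [hY_def, ← Real.rpow_mul hcl.le]
      congr 1; ring
    have h1 : (c / lam) ^ q * (c / lam) ^ ((β + 1) / (N:ℝ)) = (c / lam) ^ r₀ := by
      rw [← Real.rpow_add hcl, hqβ]
    have h2 : lam ^ r₀ * (c / lam) ^ r₀ = c ^ r₀ := by
      rw [← Real.mul_rpow hlam.le hcl.le, mul_comm lam, div_mul_cancel₀ _ hlam.ne']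
    rw [hYb]
    calc lam ^ r₀ * ((c / lam) ^ q * ((c / lam) ^ ((β + 1) / (N:ℝ)) / (β + 1)))
        = lam ^ r₀ * ((c / lam) ^ q * (c / lam) ^ ((β + 1) / (N:ℝ))) / (β + 1) := by
          ring
      _ = c ^ r₀ / (β + 1) := by rw [h1, h2]
  calc ENNReal.ofReal (lam ^ r₀) *
        ∫⁻ p in {p : EuclideanSpace ℝ (Fin N) × ℝ | 0 < p.2 ∧
            lam < poissonKernelCS N α p.1 p.2}, ENNReal.ofReal (p.2 ^ (1 - α))
      ≤ ENNReal.ofReal (lam ^ r₀) *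
          ∫⁻ p in S, ENNReal.ofReal (p.2 ^ (1 - α)) :=
        mul_le_mul_right (lintegral_mono_set hsub) _
    _ = ENNReal.ofReal (lam ^ r₀) * ∫⁻ y in Set.Ioo (0:ℝ) Y,
          ENNReal.ofReal (y ^ (1 - α)) *
            volume (Metric.ball (0 : EuclideanSpace ℝ (Fin N)) (R y)) := by rw [hTon]
    _ ≤ ENNReal.ofReal (lam ^ r₀) * ∫⁻ y in Set.Ioo (0:ℝ) Y,
          ENNReal.ofReal ((c / lam) ^ q) * B * ENNReal.ofReal (y ^ β) :=
        mul_le_mul_right (setLIntegral_mono (by fun_prop) hstep) _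
    _ = ENNReal.ofReal (lam ^ r₀) * (ENNReal.ofReal ((c / lam) ^ q) * B *
          ∫⁻ y in Set.Ioo (0:ℝ) Y, ENNReal.ofReal (y ^ β)) := by
        rw [lintegral_const_mul _ (by fun_prop)]
    _ = ENNReal.ofReal (lam ^ r₀) * (ENNReal.ofReal ((c / lam) ^ q) * B *
          ENNReal.ofReal (Y ^ (β + 1) / (β + 1))) := by rw [hIoo]
    _ = ENNReal.ofReal (lam ^ r₀ * ((c / lam) ^ q * (Y ^ (β + 1) / (β + 1)))) * B := by
        rw [ENNReal.ofReal_mul (Real.rpow_nonneg hlam.le _),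
          ENNReal.ofReal_mul (Real.rpow_nonneg hcl.le _)]
        ring
    _ = ENNReal.ofReal (c ^ r₀ / (β + 1)) * B := by rw [hconst]
    _ = ENNReal.ofReal (c ^ r₀ / (β + 1) * B.toReal) := by
        rw [ENNReal.ofReal_mul (div_nonneg (Real.rpow_nonneg hc.le _) hβ1.le),
          ENNReal.ofReal_toReal hBlt.ne]
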